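/- Let K be a field and let V be a K-vector space equipped with a point v₀ ∈ V (a 'pointed vector space', i.e., an object of the coslice category of K-modules under K). If V is dualizable in the monoidal category of pointed K-vector spaces (with tensor product (V, v₀) ⊗ (W, w₀) = (V ⊗ W, v₀ ⊗ w₀) and unit (K, 1)), then V is one-dimensional and v₀ is nonzero; equivalently, (V, v₀) is isomorphic to the unit (K, 1). -/

import Mathlib

open scoped TensorProduct

/-- Let `K` be a field and `(V, v₀)` a pointed `K`-vector space. If `(V, v₀)` is dualizable
in the symmetric monoidal category of pointed `K`-vector spaces — i.e. there is a pointed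
vector space `(D, d₀)` with point-preserving evaluation `ev : D ⊗ V → K` and coevaluation
`coev : K → V ⊗ D` satisfying the snake identities — then `(V, v₀)` is isomorphic to the
unit `(K, 1)`: there is a `K`-linear equivalence `V ≃ K` sending `v₀` to `1` (so `V` is
one-dimensional and `v₀ ≠ 0`). -/
theorem pointed_dualizable_is_unit (K : Type*) [Field K]
    (V : Type*) [AddCommGroup V] [Module K V] (v₀ : V)
    (D : Type*) [AddCommGroup D] [Module K D] (d₀ : D)
    (ev : D ⊗[K] V →ₗ[K] K) (coev : K →ₗ[K] V ⊗[K] D)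
    (hev : ev (d₀ ⊗ₜ[K] v₀) = 1) (hcoev : coev 1 = v₀ ⊗ₜ[K] d₀)
    (snake₁ : (TensorProduct.rid K V).toLinearMap ∘ₗ
        TensorProduct.map (LinearMap.id : V →ₗ[K] V) ev ∘ₗ
        (TensorProduct.assoc K V D V).toLinearMap ∘ₗ
        TensorProduct.map coev (LinearMap.id : V →ₗ[K] V) ∘ₗ
        (TensorProduct.lid K V).symm.toLinearMap = LinearMap.id)
    (snake₂ : (TensorProduct.lid K D).toLinearMap ∘ₗ
        TensorProduct.map ev (LinearMap.id : D →ₗ[K] D) ∘ₗ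
        (TensorProduct.assoc K D V D).symm.toLinearMap ∘ₗ
        TensorProduct.map (LinearMap.id : D →ₗ[K] D) coev ∘ₗ
        (TensorProduct.rid K D).symm.toLinearMap = LinearMap.id) :
    ∃ e : V ≃ₗ[K] K, e v₀ = 1 := by
  -- key: for all v, v = ev (d₀ ⊗ v) • v₀
  have key : ∀ v : V, ev (d₀ ⊗ₜ[K] v) • v₀ = v := by
    intro v
    have := congrArg (fun f => f v) snake₁
    simp only [LinearMap.comp_apply, LinearMap.id_apply, LinearEquiv.coe_toLinearMap,
      TensorProduct.lid_symm_apply] at this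
    rw [TensorProduct.map_tmul, hcoev] at this
    simpa [TensorProduct.assoc_tmul, TensorProduct.map_tmul,
      TensorProduct.rid_tmul, LinearMap.id_apply] using this
  let f : V →ₗ[K] K := ev ∘ₗ (TensorProduct.mk K D V d₀)
  let g : K →ₗ[K] V := LinearMap.toSpanSingleton K V v₀
  have hfg : f ∘ₗ g = LinearMap.id := by
    ext
    simp [f, g, LinearMap.toSpanSingleton_apply_one, hev]
  have hgf : g ∘ₗ f = LinearMap.id := by
    ext v
    simpa [f, g, LinearMap.toSpanSingleton_apply] using key v
  exact ⟨LinearEquiv.ofLinear f g hfg hgf, by simpa [f] using hev⟩
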